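/- Hölder step for the entropy estimate: let (Ω, μ) be a probability measure space, β ∈ (1,2], and let h₁, h₂ : Ω → [0,∞) be measurable with ∫ h₁ dμ = ∫ h₂ dμ = 1. Then ∫ h₁^{β-1} h₂ dμ - 1 ≤ (∫ φ_β(h₁) dμ)^{(β-1)/β} (∫ φ_β(h₂) dμ)^{1/β}, where φ_β(x) = x^β - 1 - β(x-1). -/

import Mathlib

open Real MeasureTheory Set

namespace HolderEntropyAux

noncomputable def phi (β x : ℝ) : ℝ := x ^ β - 1 - β * (x - 1)

noncomputable def psi (β x : ℝ) : ℝ := phi β x ^ (1 / β)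

noncomputable def gd (β x : ℝ) : ℝ := (x ^ (β - 1) - 1) * phi β x ^ (1 / β - 1)

variable {β : ℝ}

lemma phi_nonneg (hβ : 1 ≤ β) {x : ℝ} (hx : 0 ≤ x) : 0 ≤ phi β x := by
  have h := one_add_mul_self_le_rpow_one_add (s := x - 1) (by linarith) hβ
  have hx1 : (1 : ℝ) + (x - 1) = x := by ring
  rw [hx1] at h
  simp only [phi]; linarith

lemma phi_pos (hβ : 1 < β) {x : ℝ} (hx : 0 ≤ x) (hx1 : x ≠ 1) : 0 < phi β x := by
  have h := one_add_mul_self_lt_rpow_one_add (s := x - 1) (by linarith)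
    (fun h => hx1 (by linarith)) hβ
  have hx2 : (1 : ℝ) + (x - 1) = x := by ring
  rw [hx2] at h
  simp only [phi]; linarith

lemma hasDerivAt_phi (hβ : 1 ≤ β) (x : ℝ) :
    HasDerivAt (phi β) (β * x ^ (β - 1) - β) x := by
  have h1 : HasDerivAt (fun x : ℝ => x ^ β) (β * x ^ (β - 1)) x :=
    Real.hasDerivAt_rpow_const (Or.inr hβ)
  have h2 := ((h1.sub_const 1).sub (((hasDerivAt_id x).sub_const 1).const_mul β))
  exact h2.congr_deriv (by ring)

lemma hasDerivAt_psi (hβ : 1 < β) {x : ℝ} (hx : 0 < phi β x) :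
    HasDerivAt (psi β) (gd β x) x := by
  have hβ0 : β ≠ 0 := by positivity
  have h := (hasDerivAt_phi hβ.le x).rpow_const (p := 1 / β) (Or.inl hx.ne')
  have e : (β * x ^ (β - 1) - β) * (1 / β) * phi β x ^ (1 / β - 1) = gd β x := by
    simp only [gd]; field_simp
  rw [e] at h
  exact h

lemma key_amgm (hβ1 : 1 < β) (hβ2 : β ≤ 2) {x : ℝ} (hx : 0 < x) :
    1 ≤ (β - 1) * x ^ (β - 2) + (2 - β) * x ^ (β - 1) := by
  have h := Real.geom_mean_le_arith_mean2_weighted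
    (by linarith : (0:ℝ) ≤ β - 1) (by linarith : (0:ℝ) ≤ 2 - β)
    (Real.rpow_nonneg hx.le (β - 2)) (Real.rpow_nonneg hx.le (β - 1)) (by ring)
  calc (1 : ℝ) = (x ^ (β - 2)) ^ (β - 1) * (x ^ (β - 1)) ^ (2 - β) := by
        rw [← Real.rpow_mul hx.le, ← Real.rpow_mul hx.le, ← Real.rpow_add hx,
          show (β - 2) * (β - 1) + (β - 1) * (2 - β) = 0 by ring, Real.rpow_zero]
    _ ≤ (β - 1) * x ^ (β - 2) + (2 - β) * x ^ (β - 1) := h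

lemma sq_le_phi (hβ1 : 1 < β) (hβ2 : β ≤ 2) {x : ℝ} (hx : 0 < x) :
    (x ^ (β - 1) - 1) ^ 2 ≤ x ^ (β - 2) * phi β x := by
  have e1 : x ^ (β - 2) * x ^ β = x ^ (β - 1) * x ^ (β - 1) := by
    rw [← Real.rpow_add hx, ← Real.rpow_add hx]; ring_nf
  have e2 : x ^ (β - 2) * x = x ^ (β - 1) := by
    nth_rewrite 2 [← Real.rpow_one x]
    rw [← Real.rpow_add hx]; ring_nf
  have h := key_amgm hβ1 hβ2 hx
  simp only [phi]
  nlinarith [e1, e2, h]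

lemma hasDerivAt_gd (hβ : 1 < β) {x : ℝ} (hx : 0 < x) (hpx : 0 < phi β x) :
    HasDerivAt (gd β)
      ((β - 1) * (x ^ (β - 2) * phi β x - (x ^ (β - 1) - 1) ^ 2) * phi β x ^ (1 / β - 2)) x := by
  have hβ0 : β ≠ 0 := by positivity
  have h1 : HasDerivAt (fun x : ℝ => x ^ (β - 1) - 1) ((β - 1) * x ^ (β - 1 - 1)) x :=
    (Real.hasDerivAt_rpow_const (Or.inl hx.ne')).sub_const 1
  have h2 : HasDerivAt (fun x : ℝ => phi β x ^ (1 / β - 1))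
      ((β * x ^ (β - 1) - β) * (1 / β - 1) * phi β x ^ (1 / β - 1 - 1)) x :=
    (hasDerivAt_phi hβ.le x).rpow_const (Or.inl hpx.ne')
  have h := h1.mul h2
  have e : (β - 1) * x ^ (β - 1 - 1) * phi β x ^ (1 / β - 1) +
      (x ^ (β - 1) - 1) * ((β * x ^ (β - 1) - β) * (1 / β - 1) * phi β x ^ (1 / β - 1 - 1))
      = (β - 1) * (x ^ (β - 2) * phi β x - (x ^ (β - 1) - 1) ^ 2) * phi β x ^ (1 / β - 2) := by
    have eφ : phi β x ^ (1 / β - 1) = phi β x ^ (1 / β - 2) * phi β x := by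
      rw [show (1 / β - 1) = (1 / β - 2) + 1 by ring, Real.rpow_add hpx, Real.rpow_one]
    have e2' : (1 / β - 1 - 1) = 1 / β - 2 := by ring
    have e3 : (β - 1 - 1) = β - 2 := by ring
    rw [e2', e3, eφ]
    field_simp
    ring
  rw [e] at h
  exact h

lemma gd_deriv_nonneg (hβ1 : 1 < β) (hβ2 : β ≤ 2) {x : ℝ} (hx : 0 < x) (hpx : 0 < phi β x) :
    0 ≤ (β - 1) * (x ^ (β - 2) * phi β x - (x ^ (β - 1) - 1) ^ 2) * phi β x ^ (1 / β - 2) := by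
  have h1 := sq_le_phi hβ1 hβ2 hx
  have h2 : (0:ℝ) ≤ phi β x ^ (1 / β - 2) := Real.rpow_nonneg hpx.le _
  have h3 : (0:ℝ) ≤ β - 1 := by linarith
  have h4 : 0 ≤ x ^ (β - 2) * phi β x - (x ^ (β - 1) - 1) ^ 2 := by linarith
  positivity

lemma continuousAt_gd (hβ : 1 < β) {x : ℝ} (hpx : 0 < phi β x) :
    ContinuousAt (gd β) x := by
  have hβ0 : (0:ℝ) < β := by linarith
  have hc1 : ContinuousAt (fun y : ℝ => y ^ (β - 1) - 1) x :=
    (Real.continuousAt_rpow_const x (β - 1) (Or.inr (by linarith))).sub continuousAt_const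
  have hcφ : ContinuousAt (phi β) x := by
    have : ContinuousAt (fun y : ℝ => y ^ β) x :=
      Real.continuousAt_rpow_const x β (Or.inr (by linarith))
    exact (this.sub continuousAt_const).sub
      (continuousAt_const.mul (continuousAt_id.sub continuousAt_const))
  have hc2 : ContinuousAt (fun y : ℝ => phi β y ^ (1 / β - 1)) x :=
    hcφ.rpow_const (Or.inl hpx.ne')
  exact hc1.mul hc2

lemma gd_mono {S : Set ℝ} (hβ1 : 1 < β) (hβ2 : β ≤ 2) (hS : Convex ℝ S)
    (hSsub : ∀ s ∈ S, 0 ≤ s ∧ 0 < phi β s)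
    (hSint : ∀ s ∈ interior S, 0 < s ∧ 0 < phi β s) :
    MonotoneOn (gd β) S := by
  apply monotoneOn_of_deriv_nonneg hS
  · intro s hs
    exact (continuousAt_gd hβ1 (hSsub s hs).2).continuousWithinAt
  · intro s hs
    exact (hasDerivAt_gd hβ1 (hSint s hs).1 (hSint s hs).2).differentiableAt.differentiableWithinAt
  · intro s hs
    rw [(hasDerivAt_gd hβ1 (hSint s hs).1 (hSint s hs).2).deriv]
    exact gd_deriv_nonneg hβ1 hβ2 (hSint s hs).1 (hSint s hs).2

lemma tangent_line {f f' : ℝ → ℝ} {S : Set ℝ} (hS : Convex ℝ S)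
    (hd : ∀ s ∈ S, HasDerivAt f (f' s) s) (hm : MonotoneOn f' S)
    {x y : ℝ} (hx : x ∈ S) (hy : y ∈ S) :
    f x + f' x * (y - x) ≤ f y := by
  rcases lt_trichotomy x y with h | h | h
  · have hsub : Icc x y ⊆ S := hS.ordConnected.out hx hy
    have hcont : ContinuousOn f (Icc x y) := fun s hs =>
      ((hd s (hsub hs)).continuousAt).continuousWithinAt
    have hder : ∀ s ∈ Ioo x y, HasDerivAt f (f' s) s := fun s hs =>
      hd s (hsub (Ioo_subset_Icc_self hs))
    obtain ⟨c, hc, hceq⟩ := exists_hasDerivAt_eq_slope f f' h hcont hder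
    have hcS : c ∈ S := hsub (Ioo_subset_Icc_self hc)
    have hfc : f' x ≤ f' c := hm hx hcS hc.1.le
    have hyx : (0:ℝ) < y - x := by linarith
    rw [eq_div_iff hyx.ne'] at hceq
    nlinarith [mul_le_mul_of_nonneg_right hfc hyx.le]
  · simp [h]
  · have hsub : Icc y x ⊆ S := hS.ordConnected.out hy hx
    have hcont : ContinuousOn f (Icc y x) := fun s hs =>
      ((hd s (hsub hs)).continuousAt).continuousWithinAt
    have hder : ∀ s ∈ Ioo y x, HasDerivAt f (f' s) s := fun s hs =>
      hd s (hsub (Ioo_subset_Icc_self hs))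
    obtain ⟨c, hc, hceq⟩ := exists_hasDerivAt_eq_slope f f' h hcont hder
    have hcS : c ∈ S := hsub (Ioo_subset_Icc_self hc)
    have hfc : f' c ≤ f' x := hm hcS hx hc.2.le
    have hyx : (0:ℝ) < x - y := by linarith
    rw [eq_div_iff hyx.ne'] at hceq
    nlinarith [mul_le_mul_of_nonneg_right hfc hyx.le]

/-- Tangent inequality on a suitable set. -/
lemma tangent_psi {S : Set ℝ} (hβ1 : 1 < β) (hβ2 : β ≤ 2) (hS : Convex ℝ S)
    (hSsub : ∀ s ∈ S, 0 ≤ s ∧ 0 < phi β s)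
    (hSint : ∀ s ∈ interior S, 0 < s ∧ 0 < phi β s)
    {x y : ℝ} (hx : x ∈ S) (hy : y ∈ S) :
    psi β x + gd β x * (y - x) ≤ psi β y :=
  tangent_line hS (fun s hs => hasDerivAt_psi hβ1 (hSsub s hs).2)
    (gd_mono hβ1 hβ2 hS hSsub hSint) hx hy

/-- The core pointwise inequality. -/
lemma ptwise (hβ1 : 1 < β) (hβ2 : β ≤ 2) {x y : ℝ} (hx : 0 ≤ x) (hy : 0 ≤ y) :
    (x ^ (β - 1) - 1) * y - (β - 1) * (x - 1) ≤
      phi β x ^ ((β - 1) / β) * phi β y ^ (1 / β) := by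
  have hβ0 : (0:ℝ) < β := by linarith
  have hc0 : (0:ℝ) < β - 1 := by linarith
  have hRHS0 : 0 ≤ phi β x ^ ((β - 1) / β) * phi β y ^ (1 / β) :=
    mul_nonneg (Real.rpow_nonneg (phi_nonneg hβ1.le hx) _)
      (Real.rpow_nonneg (phi_nonneg hβ1.le hy) _)
  rcases eq_or_ne x 1 with hx1 | hx1
  · subst hx1
    simp only [Real.one_rpow, sub_self, zero_mul, mul_zero, sub_zero, zero_sub]
    linarith
  -- Bernoulli: x ^ (β-1) ≤ 1 + (β-1)*(x-1)
  have hbern : x ^ (β - 1) ≤ 1 + (β - 1) * (x - 1) := by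
    have h := rpow_one_add_le_one_add_mul_self (s := x - 1) (by linarith)
      (by linarith : (0:ℝ) ≤ β - 1) (by linarith : β - 1 ≤ 1)
    have e : (1:ℝ) + (x - 1) = x := by ring
    rwa [e] at h
  have hφx : 0 < phi β x := phi_pos hβ1 hx hx1
  -- tangent conversion
  have tangent_conv : ∀ {y : ℝ}, 0 ≤ y →
      psi β x + gd β x * (y - x) ≤ psi β y →
      (x ^ (β - 1) - 1) * y - (β - 1) * (x - 1) ≤
        phi β x ^ ((β - 1) / β) * phi β y ^ (1 / β) := by
    intro y hy0 htan
    have hmul := mul_le_mul_of_nonneg_left htan (Real.rpow_nonneg hφx.le ((β - 1) / β))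
    have e1 : phi β x ^ ((β - 1) / β) * psi β x = phi β x := by
      rw [psi, ← Real.rpow_add hφx, show (β - 1) / β + 1 / β = 1 by field_simp; ring, Real.rpow_one]
    have e2 : phi β x ^ ((β - 1) / β) * gd β x = x ^ (β - 1) - 1 := by
      rw [gd, mul_comm (x ^ (β - 1) - 1), ← mul_assoc, ← Real.rpow_add hφx,
        show (β - 1) / β + (1 / β - 1) = 0 by field_simp; ring, Real.rpow_zero, one_mul]
    have e3 : x ^ (β - 1) * x = x ^ β := by
      rcases eq_or_lt_of_le hx with h0 | h0
      · rw [← h0, Real.zero_rpow (by linarith : β - 1 ≠ 0), Real.zero_rpow (by linarith : β ≠ 0),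
          zero_mul]
      · nth_rewrite 2 [← Real.rpow_one x]
        rw [← Real.rpow_add h0]; ring_nf
    have expand : phi β x + (x ^ (β - 1) - 1) * (y - x)
        = (x ^ (β - 1) - 1) * y - (β - 1) * (x - 1) := by
      simp only [phi]; nlinarith [e3]
    calc (x ^ (β - 1) - 1) * y - (β - 1) * (x - 1)
        = phi β x ^ ((β - 1) / β) * (psi β x + gd β x * (y - x)) := by
          rw [mul_add, e1, ← mul_assoc, e2, expand]
      _ ≤ phi β x ^ ((β - 1) / β) * psi β y := hmul
      _ = phi β x ^ ((β - 1) / β) * phi β y ^ (1 / β) := rfl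
  rcases lt_or_gt_of_ne hx1 with hxlt | hxgt
  · -- x < 1
    rcases lt_or_ge y 1 with hylt | hyge
    · -- tangent case on Ico 0 1
      have hItan : ∀ s ∈ Ico (0:ℝ) 1, 0 ≤ s ∧ 0 < phi β s := fun s hs =>
        ⟨hs.1, phi_pos hβ1 hs.1 hs.2.ne⟩
      have hIint : ∀ s ∈ interior (Ico (0:ℝ) 1), 0 < s ∧ 0 < phi β s := by
        intro s hs
        rw [interior_Ico] at hs
        exact ⟨hs.1, phi_pos hβ1 hs.1.le hs.2.ne⟩
      exact tangent_conv hy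
        (tangent_psi hβ1 hβ2 (convex_Ico 0 1) hItan hIint ⟨hx, hxlt⟩ ⟨hy, hylt⟩)
    · -- easy case: slope nonpositive, y ≥ 1
      have hslope : x ^ (β - 1) - 1 ≤ 0 := by
        have : x ^ (β - 1) ≤ 1 ^ (β - 1) :=
          Real.rpow_le_rpow hx hxlt.le (by linarith)
        rw [Real.one_rpow] at this; linarith
      have h1 : (x ^ (β - 1) - 1) * y ≤ (x ^ (β - 1) - 1) * 1 := by
        apply mul_le_mul_of_nonpos_left _ hslope
        linarith
      calc (x ^ (β - 1) - 1) * y - (β - 1) * (x - 1)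
          ≤ (x ^ (β - 1) - 1) * 1 - (β - 1) * (x - 1) := by linarith
        _ ≤ 0 := by nlinarith [hbern]
        _ ≤ _ := hRHS0
  · -- x > 1
    rcases le_or_gt y 1 with hyle | hygt
    · -- easy case: slope nonneg, y ≤ 1
      have hslope : 0 ≤ x ^ (β - 1) - 1 := by
        have : (1:ℝ) ^ (β - 1) ≤ x ^ (β - 1) :=
          Real.rpow_le_rpow (by norm_num) hxgt.le (by linarith)
        rw [Real.one_rpow] at this; linarith
      have h1 : (x ^ (β - 1) - 1) * y ≤ (x ^ (β - 1) - 1) * 1 :=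
        mul_le_mul_of_nonneg_left hyle hslope
      calc (x ^ (β - 1) - 1) * y - (β - 1) * (x - 1)
          ≤ (x ^ (β - 1) - 1) * 1 - (β - 1) * (x - 1) := by linarith
        _ ≤ 0 := by nlinarith [hbern]
        _ ≤ _ := hRHS0
    · -- tangent case on Ioi 1
      have hItan : ∀ s ∈ Ioi (1:ℝ), 0 ≤ s ∧ 0 < phi β s := fun s hs =>
        ⟨by linarith [mem_Ioi.mp hs], phi_pos hβ1 (by linarith [mem_Ioi.mp hs])
          (by have := mem_Ioi.mp hs; linarith)⟩
      have hIint : ∀ s ∈ interior (Ioi (1:ℝ)), 0 < s ∧ 0 < phi β s := by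
        intro s hs
        rw [interior_Ioi] at hs
        have := mem_Ioi.mp hs
        exact ⟨by linarith, phi_pos hβ1 (by linarith) (by linarith)⟩
      exact tangent_conv hy
        (tangent_psi hβ1 hβ2 (convex_Ioi 1) hItan hIint hxgt hygt)

/-- The family version: pointwise inequality linear in φ's, for every t > 0. -/
lemma family (hβ1 : 1 < β) (hβ2 : β ≤ 2) {t : ℝ} (ht : 0 < t)
    {x y : ℝ} (hx : 0 ≤ x) (hy : 0 ≤ y) :
    (x ^ (β - 1) - 1) * y - (β - 1) * (x - 1) ≤
      (β - 1) / β * (t * phi β x) + 1 / β * (t ^ (1 - β) * phi β y) := by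
  have hβ0 : (0:ℝ) < β := by linarith
  have hφx := phi_nonneg hβ1.le hx
  have hφy := phi_nonneg hβ1.le hy
  have ht' : (0:ℝ) ≤ t ^ (1 - β) := Real.rpow_nonneg ht.le _
  have hgm := Real.geom_mean_le_arith_mean2_weighted
    (by apply div_nonneg <;> linarith : (0:ℝ) ≤ (β - 1) / β)
    (by apply div_nonneg <;> linarith : (0:ℝ) ≤ 1 / β)
    (mul_nonneg ht.le hφx) (mul_nonneg ht' hφy) (by field_simp; ring)
  have e : (t * phi β x) ^ ((β - 1) / β) * (t ^ (1 - β) * phi β y) ^ (1 / β)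
      = phi β x ^ ((β - 1) / β) * phi β y ^ (1 / β) := by
    rw [Real.mul_rpow ht.le hφx, Real.mul_rpow ht' hφy, ← Real.rpow_mul ht.le]
    rw [show t ^ ((β - 1) / β) * phi β x ^ ((β - 1) / β) * (t ^ ((1 - β) * (1 / β)) * phi β y ^ (1 / β))
        = (t ^ ((β - 1) / β) * t ^ ((1 - β) * (1 / β))) * (phi β x ^ ((β - 1) / β) * phi β y ^ (1 / β)) by ring]
    rw [← Real.rpow_add ht, show (β - 1) / β + (1 - β) * (1 / β) = 0 by field_simp; ring,
      Real.rpow_zero, one_mul]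
  rw [e] at hgm
  exact le_trans (ptwise hβ1 hβ2 hx hy) hgm

end HolderEntropyAux

open HolderEntropyAux

theorem holder_entropy_step {Ω : Type*} [MeasurableSpace Ω] (μ : Measure Ω)
    [IsProbabilityMeasure μ] (β : ℝ) (hβ1 : 1 < β) (hβ2 : β ≤ 2)
    (φ : ℝ → ℝ) (hφ : ∀ x : ℝ, φ x = x ^ β - 1 - β * (x - 1))
    (h₁ h₂ : Ω → ℝ) (hm₁ : Measurable h₁) (hm₂ : Measurable h₂)
    (hpos₁ : ∀ ω, 0 ≤ h₁ ω) (hpos₂ : ∀ ω, 0 ≤ h₂ ω)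
    (hint₁ : ∫ ω, h₁ ω ∂μ = 1) (hint₂ : ∫ ω, h₂ ω ∂μ = 1)
    (hI : Integrable (fun ω => h₁ ω ^ (β - 1) * h₂ ω) μ)
    (hIφ₁ : Integrable (fun ω => φ (h₁ ω)) μ)
    (hIφ₂ : Integrable (fun ω => φ (h₂ ω)) μ) :
    (∫ ω, h₁ ω ^ (β - 1) * h₂ ω ∂μ) - 1 ≤
      (∫ ω, φ (h₁ ω) ∂μ) ^ ((β - 1) / β) * (∫ ω, φ (h₂ ω) ∂μ) ^ (1 / β) := by
  have hβ0 : (0:ℝ) < β := by linarith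
  have hc0 : (0:ℝ) < β - 1 := by linarith
  have hφeq : φ = phi β := by funext x; rw [hφ]; rfl
  rw [hφeq] at hIφ₁ hIφ₂ ⊢
  have hInt1 : Integrable h₁ μ := by
    by_contra h; rw [integral_undef h] at hint₁; norm_num at hint₁
  have hInt2 : Integrable h₂ μ := by
    by_contra h; rw [integral_undef h] at hint₂; norm_num at hint₂
  set A := ∫ ω, phi β (h₁ ω) ∂μ with hAdef
  set B := ∫ ω, phi β (h₂ ω) ∂μ with hBdef
  have hA0 : 0 ≤ A := integral_nonneg fun ω => phi_nonneg hβ1.le (hpos₁ ω)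
  have hB0 : 0 ≤ B := integral_nonneg fun ω => phi_nonneg hβ1.le (hpos₂ ω)
  -- key bound for each t > 0
  have key : ∀ t : ℝ, 0 < t →
      (∫ ω, h₁ ω ^ (β - 1) * h₂ ω ∂μ) - 1 ≤
        (β - 1) / β * (t * A) + 1 / β * (t ^ (1 - β) * B) := by
    intro t ht
    have hIL : Integrable
        (fun ω => (h₁ ω ^ (β - 1) - 1) * h₂ ω - (β - 1) * (h₁ ω - 1)) μ := by
      have e : (fun ω => (h₁ ω ^ (β - 1) - 1) * h₂ ω - (β - 1) * (h₁ ω - 1))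
          = fun ω => (h₁ ω ^ (β - 1) * h₂ ω - h₂ ω) - ((β - 1) * h₁ ω - (β - 1)) := by
        funext ω; ring
      rw [e]
      exact (hI.sub hInt2).sub ((hInt1.const_mul (β - 1)).sub (integrable_const (β - 1)))
    have hIR : Integrable
        (fun ω => (β - 1) / β * (t * phi β (h₁ ω)) + 1 / β * (t ^ (1 - β) * phi β (h₂ ω))) μ :=
      ((hIφ₁.const_mul t).const_mul ((β - 1) / β)).add
        ((hIφ₂.const_mul (t ^ (1 - β))).const_mul (1 / β))
    have hmono := integral_mono hIL hIR
      (fun ω => family hβ1 hβ2 ht (hpos₁ ω) (hpos₂ ω))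
    have hLeft : ∫ ω, ((h₁ ω ^ (β - 1) - 1) * h₂ ω - (β - 1) * (h₁ ω - 1)) ∂μ
        = (∫ ω, h₁ ω ^ (β - 1) * h₂ ω ∂μ) - 1 := by
      have i1 : Integrable (fun ω => h₁ ω ^ (β - 1) * h₂ ω - h₂ ω) μ := hI.sub hInt2
      have i2 : Integrable (fun ω => (β - 1) * h₁ ω - (β - 1)) μ :=
        (hInt1.const_mul (β - 1)).sub (integrable_const (β - 1))
      rw [show (fun ω => (h₁ ω ^ (β - 1) - 1) * h₂ ω - (β - 1) * (h₁ ω - 1))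
          = fun ω => (h₁ ω ^ (β - 1) * h₂ ω - h₂ ω) - ((β - 1) * h₁ ω - (β - 1))
          from funext fun ω => by ring]
      have e0 : (∫ ω, ((h₁ ω ^ (β - 1) * h₂ ω - h₂ ω) - ((β - 1) * h₁ ω - (β - 1))) ∂μ)
          = (∫ ω, (h₁ ω ^ (β - 1) * h₂ ω - h₂ ω) ∂μ) - ∫ ω, ((β - 1) * h₁ ω - (β - 1)) ∂μ :=
        integral_sub i1 i2
      have ea : (∫ ω, (h₁ ω ^ (β - 1) * h₂ ω - h₂ ω) ∂μ)
          = (∫ ω, h₁ ω ^ (β - 1) * h₂ ω ∂μ) - ∫ ω, h₂ ω ∂μ := integral_sub hI hInt2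
      have eb : (∫ ω, ((β - 1) * h₁ ω - (β - 1)) ∂μ)
          = (∫ ω, (β - 1) * h₁ ω ∂μ) - ∫ (_ : Ω), (β - 1) ∂μ :=
        integral_sub (hInt1.const_mul (β - 1)) (integrable_const (β - 1))
      have ec : (∫ ω, (β - 1) * h₁ ω ∂μ) = (β - 1) * ∫ ω, h₁ ω ∂μ := integral_const_mul _ _
      rw [e0, ea, eb, ec, hint₁, hint₂, integral_const]
      simp
    have hRight : ∫ ω, ((β - 1) / β * (t * phi β (h₁ ω)) + 1 / β * (t ^ (1 - β) * phi β (h₂ ω))) ∂μ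
        = (β - 1) / β * (t * A) + 1 / β * (t ^ (1 - β) * B) := by
      have j1 : Integrable (fun ω => (β - 1) / β * (t * phi β (h₁ ω))) μ :=
        (hIφ₁.const_mul t).const_mul ((β - 1) / β)
      have j2 : Integrable (fun ω => 1 / β * (t ^ (1 - β) * phi β (h₂ ω))) μ :=
        (hIφ₂.const_mul (t ^ (1 - β))).const_mul (1 / β)
      have e0 : (∫ ω, ((β - 1) / β * (t * phi β (h₁ ω)) + 1 / β * (t ^ (1 - β) * phi β (h₂ ω))) ∂μ)
          = (∫ ω, (β - 1) / β * (t * phi β (h₁ ω)) ∂μ)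
            + ∫ ω, 1 / β * (t ^ (1 - β) * phi β (h₂ ω)) ∂μ := integral_add j1 j2
      have ea : (∫ ω, (β - 1) / β * (t * phi β (h₁ ω)) ∂μ)
          = (β - 1) / β * ∫ ω, t * phi β (h₁ ω) ∂μ := integral_const_mul _ _
      have eb : (∫ ω, t * phi β (h₁ ω) ∂μ) = t * ∫ ω, phi β (h₁ ω) ∂μ := integral_const_mul _ _
      have ec : (∫ ω, 1 / β * (t ^ (1 - β) * phi β (h₂ ω)) ∂μ)
          = 1 / β * ∫ ω, t ^ (1 - β) * phi β (h₂ ω) ∂μ := integral_const_mul _ _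
      have ed : (∫ ω, t ^ (1 - β) * phi β (h₂ ω) ∂μ)
          = t ^ (1 - β) * ∫ ω, phi β (h₂ ω) ∂μ := integral_const_mul _ _
      rw [e0, ea, eb, ec, ed]
    rw [hLeft, hRight] at hmono
    exact hmono
  -- now optimize over t
  rcases eq_or_lt_of_le hA0 with hA | hA
  · -- A = 0
    rw [← hA, Real.zero_rpow (by positivity : (β - 1) / β ≠ 0), zero_mul]
    by_contra hcon
    push_neg at hcon
    set L := (∫ ω, h₁ ω ^ (β - 1) * h₂ ω ∂μ) - 1 with hLdef
    have hL : 0 < L := hcon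
    rcases eq_or_lt_of_le hB0 with hB | hB
    · have := key 1 one_pos
      rw [← hA, ← hB] at this
      simp at this
      linarith
    · set t := (B / (β * (L / 2))) ^ (1 / (β - 1) : ℝ) with htdef
      have htpos : 0 < t := Real.rpow_pos_of_pos (by positivity) _
      have htpow : t ^ (1 - β) = β * (L / 2) / B := by
        rw [htdef, ← Real.rpow_mul (by positivity),
          show 1 / (β - 1) * (1 - β) = -1 by field_simp; ring,
          Real.rpow_neg_one, inv_div]
      have hk := key t htpos
      rw [← hA, htpow] at hk
      have : (β - 1) / β * (t * 0) + 1 / β * (β * (L / 2) / B * B) = L / 2 := by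
        have hBne : B ≠ 0 := ne_of_gt hB
        have hβne : β ≠ 0 := ne_of_gt hβ0
        field_simp
        ring
      rw [this] at hk
      linarith
  · rcases eq_or_lt_of_le hB0 with hB | hB
    · -- B = 0
      rw [← hB, Real.zero_rpow (by positivity : (1:ℝ) / β ≠ 0), mul_zero]
      by_contra hcon
      push_neg at hcon
      set L := (∫ ω, h₁ ω ^ (β - 1) * h₂ ω ∂μ) - 1 with hLdef
      have hL : 0 < L := hcon
      set t := (L / 2) * β / ((β - 1) * A) with htdef
      have htpos : 0 < t := by positivity
      have hk := key t htpos
      rw [← hB] at hk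
      have : (β - 1) / β * (t * A) + 1 / β * (t ^ (1 - β) * 0) = L / 2 := by
        rw [htdef]; field_simp; ring
      rw [this] at hk
      linarith
    · -- main case A, B > 0
      set t := (B / A) ^ ((1:ℝ) / β) with htdef
      have htpos : 0 < t := Real.rpow_pos_of_pos (by positivity) _
      have hk := key t htpos
      have hβne : β ≠ 0 := ne_of_gt hβ0
      have e1 : t * A = A ^ ((β - 1) / β) * B ^ (1 / β) := by
        have h2 : A ^ ((β - 1) / β) = A / A ^ ((1:ℝ) / β) := by
          rw [show (β - 1) / β = 1 - 1 / β by field_simp, Real.rpow_sub hA, Real.rpow_one]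
        rw [htdef, Real.div_rpow hB0 hA0, h2]
        have hApow : A ^ ((1:ℝ) / β) ≠ 0 := (Real.rpow_pos_of_pos hA _).ne'
        field_simp
      have e2 : t ^ (1 - β) * B = A ^ ((β - 1) / β) * B ^ (1 / β) := by
        have hB2 : B ^ ((1:ℝ) / β) = B / B ^ ((β - 1) / β) := by
          rw [show (1:ℝ) / β = 1 - (β - 1) / β by field_simp; ring, Real.rpow_sub hB, Real.rpow_one]
        have h3 : t ^ (1 - β) = A ^ ((β - 1) / β) / B ^ ((β - 1) / β) := by
          rw [htdef, ← Real.rpow_mul (by positivity : (0:ℝ) ≤ B / A),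
            show (1:ℝ) / β * (1 - β) = -((β - 1) / β) by field_simp; ring,
            Real.rpow_neg (by positivity : (0:ℝ) ≤ B / A), Real.div_rpow hB0 hA0, inv_div]
        rw [h3, hB2]
        have hBpow : B ^ ((β - 1) / β) ≠ 0 := (Real.rpow_pos_of_pos hB _).ne'
        field_simp
      rw [e1, e2] at hk
      calc (∫ ω, h₁ ω ^ (β - 1) * h₂ ω ∂μ) - 1
          ≤ (β - 1) / β * (A ^ ((β - 1) / β) * B ^ (1 / β))
            + 1 / β * (A ^ ((β - 1) / β) * B ^ (1 / β)) := hk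
        _ = A ^ ((β - 1) / β) * B ^ (1 / β) := by field_simp; ring
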